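/- Let n ≥ 1 and r ≥ 1. Let Γ be a closed subgroup of the torus T^n = (ℝ/ℤ)^n such that its preimage q⁻¹(Γ) ⊆ ℝ^n is a union of affine hyperplanes all parallel to one fixed linear hyperplane H ⊂ ℝ^n (this encodes that Γ has codimension at most one; in the case Γ = T^n the preimage ℝ^n is the union of all translates of H). Then Γ satisfies Condition A for r if and only if Γ ∩ Π_r ≠ ∅. -/

import Mathlib

noncomputable section

/-- The `n`-dimensional torus `(ℝ/ℤ)^n`. -/
abbrev Torus (n : ℕ) := Fin n → AddCircle (1 : ℝ)

/-- The quotient homomorphism `q : ℝ^n → T^n`. -/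
def qmap (n : ℕ) (v : Fin n → ℝ) : Torus n := fun j => (v j : AddCircle (1 : ℝ))

/-- Condition A for `r`: there are `r` points of `Γ` with lifts `λ i j ∈ (0,1)`
whose coordinatewise sums are all `< 1`. -/
def CondA (n r : ℕ) (Γ : Set (Torus n)) : Prop :=
  ∃ lam : Fin r → Fin n → ℝ,
    (∀ i j, 0 < lam i j ∧ lam i j < 1) ∧
    (∀ i, qmap n (lam i) ∈ Γ) ∧
    (∀ j, (∑ i, lam i j) < 1)

/-- `Π_r`, the image under `q` of the open cube `(0, 1/r)^n`. -/
def PiCube (n r : ℕ) : Set (Torus n) :=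
  qmap n '' {v | ∀ j, 0 < v j ∧ v j < 1 / (r : ℝ)}

/-- In the open cube `(0,1/r)^n`, a linear functional attains any value strictly between
`N/r` and `P/r`, where `N`/`P` are the sums of negative/positive parts of its coefficients. -/
lemma exists_cube_val (n r : ℕ) (hr : 1 ≤ r) (f : (Fin n → ℝ) →ₗ[ℝ] ℝ) (t : ℝ)
    (h1 : (∑ j, min (f (fun k => if j = k then (1:ℝ) else 0)) 0) / r < t)
    (h2 : t < (∑ j, max (f (fun k => if j = k then (1:ℝ) else 0)) 0) / r) :
    ∃ w : Fin n → ℝ, (∀ j, 0 < w j ∧ w j < 1 / (r : ℝ)) ∧ f w = t := by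
  set c : Fin n → ℝ := fun j => f (fun k => if j = k then (1:ℝ) else 0) with hc
  set N : ℝ := ∑ j, min (c j) 0 with hN
  set P : ℝ := ∑ j, max (c j) 0 with hP
  have hr0 : (0:ℝ) < r := by exact_mod_cast hr
  have hNP : N < P := by
    have := h1.trans h2
    calc N = N / r * r := by field_simp
    _ < P / r * r := by exact mul_lt_mul_of_pos_right this hr0
    _ = P := by field_simp
  have hD : (0:ℝ) < P - N := by linarith
  set ε : ℝ := min (min ((t - N / r) / (2 * (P - N))) ((P / r - t) / (2 * (P - N)))) (1 / (2 * r)) with hε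
  have hε0 : 0 < ε := by
    have ha : 0 < t - N / r := by linarith
    have hb : 0 < P / r - t := by linarith
    refine lt_min (lt_min (div_pos ha (by linarith)) (div_pos hb (by linarith))) (by positivity)
  have hεr : ε < 1 / r := by
    have : ε ≤ 1 / (2 * r) := min_le_right _ _
    have h12 : 1 / (2 * r) < 1 / (r:ℝ) := by
      rw [div_lt_div_iff₀ (by positivity) hr0]; nlinarith
    linarith
  have hε1 : ε * (P - N) ≤ (t - N / r) / 2 := by
    calc ε * (P - N) ≤ (t - N / r) / (2 * (P - N)) * (P - N) := by
          exact mul_le_mul_of_nonneg_right ((min_le_left _ _).trans (min_le_left _ _)) hD.le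
    _ = (t - N / r) / 2 := by field_simp
  have hε2 : ε * (P - N) ≤ (P / r - t) / 2 := by
    calc ε * (P - N) ≤ (P / r - t) / (2 * (P - N)) * (P - N) := by
          exact mul_le_mul_of_nonneg_right ((min_le_left _ _).trans (min_le_right _ _)) hD.le
    _ = (P / r - t) / 2 := by field_simp
  set x : Fin n → ℝ := fun j => if c j < 0 then 1 / r - ε else ε with hx
  set y : Fin n → ℝ := fun j => if 0 < c j then 1 / r - ε else ε with hy
  have hform : ∀ v : Fin n → ℝ, f v = ∑ j, v j * c j := by
    intro v
    rw [LinearMap.pi_apply_eq_sum_univ f v]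
    simp [hc, smul_eq_mul]
  have hfx : f x = (1 / r - ε) * N + ε * P := by
    rw [hform, hN, hP, Finset.mul_sum, Finset.mul_sum, ← Finset.sum_add_distrib]
    refine Finset.sum_congr rfl fun j _ => ?_
    by_cases h : c j < 0
    · simp [hx, h, min_eq_left h.le, max_eq_right h.le]
    · push_neg at h
      simp [hx, not_lt.mpr h, min_eq_right h, max_eq_left h]
  have hfy : f y = (1 / r - ε) * P + ε * N := by
    rw [hform, hN, hP, Finset.mul_sum, Finset.mul_sum, ← Finset.sum_add_distrib]
    refine Finset.sum_congr rfl fun j _ => ?_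
    by_cases h : 0 < c j
    · simp [hy, h, min_eq_right h.le, max_eq_left h.le]
    · push_neg at h
      simp [hy, not_lt.mpr h, min_eq_left h, max_eq_right h]
  have hfxt : f x < t := by
    rw [hfx]
    have : (1 / r - ε) * N + ε * P = N / r + ε * (P - N) := by ring
    rw [this]; linarith
  have hfyt : t < f y := by
    rw [hfy]
    have : (1 / r - ε) * P + ε * N = P / r - ε * (P - N) := by ring
    rw [this]; linarith
  set s : ℝ := (t - f x) / (f y - f x) with hs
  have hfyx : 0 < f y - f x := by linarith
  have hs0 : 0 ≤ s := div_nonneg (by linarith) hfyx.le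
  have hs1 : s ≤ 1 := by
    rw [hs, div_le_one hfyx]; linarith
  have hxb : ∀ j, 0 < x j ∧ x j < 1 / (r:ℝ) := by
    intro j; rw [hx]; dsimp only
    split <;> constructor <;> linarith
  have hyb : ∀ j, 0 < y j ∧ y j < 1 / (r:ℝ) := by
    intro j; rw [hy]; dsimp only
    split <;> constructor <;> linarith
  clear_value s x y ε N P c
  clear hc hN hP hε hx hy hfx hfy hε1 hε2
  refine ⟨fun j => x j + s * (y j - x j), fun j => ?_, ?_⟩
  · obtain ⟨hx1, hx2⟩ := hxb j
    obtain ⟨hy1, hy2⟩ := hyb j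
    dsimp only
    rcases le_total (x j) (y j) with h | h
    · constructor
      · nlinarith [mul_nonneg hs0 (by linarith : (0:ℝ) ≤ y j - x j)]
      · nlinarith [mul_nonneg (by linarith : (0:ℝ) ≤ 1 - s) (by linarith : (0:ℝ) ≤ y j - x j)]
    · constructor
      · nlinarith [mul_nonneg (by linarith : (0:ℝ) ≤ 1 - s) (by linarith : (0:ℝ) ≤ x j - y j)]
      · nlinarith [mul_nonneg hs0 (by linarith : (0:ℝ) ≤ x j - y j)]
  · have : (fun j => x j + s * (y j - x j)) = x + s • (y - x) := by
      funext j; simp [smul_eq_mul]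
    rw [this, map_add, map_smul, map_sub, smul_eq_mul, hs]
    field_simp
    ring

/-- If the preimage of the closed subgroup `Γ ⊆ T^n` in `ℝ^n` is a union of affine
hyperplanes all parallel to one fixed linear hyperplane (i.e. the preimage is
`f ⁻¹' C` for a nonzero linear functional `f` and some set `C ⊆ ℝ`), then
Condition A for `r` holds for `Γ` iff `Γ` meets `Π_r`. -/
theorem condA_iff_inter_piCube_of_codim_le_one
    (n r : ℕ) (hn : 1 ≤ n) (hr : 1 ≤ r)
    (Γ : AddSubgroup (Torus n)) (hclosed : IsClosed (Γ : Set (Torus n)))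
    (f : (Fin n → ℝ) →ₗ[ℝ] ℝ) (hf : f ≠ 0)
    (C : Set ℝ) (hpre : qmap n ⁻¹' (Γ : Set (Torus n)) = f ⁻¹' C) :
    CondA n r (Γ : Set (Torus n)) ↔ ((Γ : Set (Torus n)) ∩ PiCube n r).Nonempty := by
  have hr0 : (0:ℝ) < r := by exact_mod_cast hr
  have hmemC : ∀ v : Fin n → ℝ, qmap n v ∈ (Γ : Set (Torus n)) ↔ f v ∈ C := fun v =>
    Set.ext_iff.1 hpre v
  constructor
  · rintro ⟨lam, hlam01, hlamΓ, hlamsum⟩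
    set c : Fin n → ℝ := fun j => f (fun k => if j = k then (1:ℝ) else 0) with hc
    have hform : ∀ v : Fin n → ℝ, f v = ∑ j, v j * c j := by
      intro v
      rw [LinearMap.pi_apply_eq_sum_univ f v]
      simp [hc, smul_eq_mul]
    obtain ⟨j0, hj0⟩ : ∃ j, c j ≠ 0 := by
      by_contra h
      push_neg at h
      exact hf (LinearMap.ext fun v => by rw [hform]; simp [h])
    have hsurj : Function.Surjective f := by
      intro z
      refine ⟨(z / c j0) • (fun k => if j0 = k then (1:ℝ) else 0), ?_⟩
      rw [map_smul, smul_eq_mul]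
      show z / c j0 * c j0 = z
      field_simp
    -- the standard basis vectors map to 0 in the torus, so c j ∈ C
    have hCj : ∀ j, c j ∈ C := by
      intro j
      refine (hmemC _).1 ?_
      have h0 : qmap n (fun k => if j = k then (1:ℝ) else 0) = 0 := by
        funext k
        show (((if j = k then (1:ℝ) else 0) : ℝ) : AddCircle (1:ℝ)) = 0
        split
        · exact AddCircle.coe_period 1
        · simp
      rw [h0]
      exact Γ.zero_mem
    -- the subgroup S = f(q⁻¹Γ) of ℝ, equal to C as a set
    set qh : (Fin n → ℝ) →+ Torus n :=
      { toFun := qmap n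
        map_zero' := by funext j; simp [qmap]
        map_add' := fun v w => by funext j; simp [qmap] } with hqh
    set S : AddSubgroup ℝ := AddSubgroup.map f.toAddMonoidHom (AddSubgroup.comap qh Γ) with hS
    have hSC : ∀ z : ℝ, z ∈ S ↔ z ∈ C := by
      intro z
      constructor
      · rintro ⟨v, hv, rfl⟩
        exact (hmemC v).1 hv
      · intro hz
        obtain ⟨v, rfl⟩ := hsurj z
        exact ⟨v, (hmemC v).2 hz, rfl⟩
    set N : ℝ := ∑ j, min (c j) 0 with hN
    set P : ℝ := ∑ j, max (c j) 0 with hP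
    -- the coordinatewise sum u of the lifts
    set u : Fin n → ℝ := fun j => ∑ i, lam i j with hu
    have hu01 : ∀ j, 0 < u j ∧ u j < 1 := by
      intro j
      constructor
      · rw [hu]
        exact Finset.sum_pos (fun i _ => (hlam01 i j).1) ⟨⟨0, hr⟩, Finset.mem_univ _⟩
      · exact hlamsum j
    have hfu : f u = ∑ i, f (lam i) := by
      have : u = ∑ i, lam i := by
        funext j
        rw [hu]
        simp [Finset.sum_apply]
      rw [this, map_sum]
    have hNdef : (∑ j, min (f (fun k => if j = k then (1:ℝ) else 0)) 0) = N := rfl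
    have hPdef : (∑ j, max (f (fun k => if j = k then (1:ℝ) else 0)) 0) = P := rfl
    clear_value u N P S qh c
    clear hS hqh hpre
    -- find t ∈ C with N/r < t < P/r
    obtain ⟨t, htC, ht1, ht2⟩ : ∃ t, t ∈ C ∧ N / r < t ∧ t < P / r := by
      rcases AddSubgroup.dense_or_cyclic S with hd | ⟨a, ha⟩
      · have hNP : N / r < P / r := by
          have hNP' : N < P := by
            rw [hN, hP]
            refine Finset.sum_lt_sum (fun j _ => min_le_max) ⟨j0, Finset.mem_univ _, ?_⟩
            rcases hj0.lt_or_gt with h | h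
            · rw [min_eq_left h.le, max_eq_right h.le]; exact h
            · rw [min_eq_right h.le, max_eq_left h.le]; exact h
          rw [div_lt_div_iff₀ hr0 hr0]
          nlinarith
        obtain ⟨z, hzS, hz⟩ := hd.exists_mem_open isOpen_Ioo (Set.nonempty_Ioo.2 hNP)
        exact ⟨z, (hSC z).1 hzS, hz.1, hz.2⟩
      · -- cyclic case
        have hmemS : ∀ z : ℝ, z ∈ S ↔ ∃ k : ℤ, k • a = z := by
          intro z; rw [ha]; exact AddSubgroup.mem_closure_singleton
        have ha0 : a ≠ 0 := by
          intro h
          obtain ⟨k, hk⟩ := (hmemS (c j0)).1 ((hSC _).2 (hCj j0))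
          rw [h, smul_zero] at hk
          exact hj0 hk.symm
        set b : ℝ := |a| with hb
        have hb0 : 0 < b := abs_pos.2 ha0
        have hmemb : ∀ z : ℝ, z ∈ S ↔ ∃ k : ℤ, k • b = z := by
          intro z
          rw [hmemS]
          rcases abs_cases a with ⟨h, _⟩ | ⟨h, _⟩
          · rw [hb, h]
          · rw [hb, h]
            constructor
            · rintro ⟨k, rfl⟩; exact ⟨-k, by simp⟩
            · rintro ⟨k, rfl⟩; exact ⟨-k, by simp⟩
        have hge : ∀ z : ℝ, 0 < z → z ∈ S → b ≤ z := by
          intro z hz hzS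
          obtain ⟨k, hk⟩ := (hmemb z).1 hzS
          rw [zsmul_eq_mul] at hk
          have h0 : 0 < (k:ℝ) := by nlinarith
          have h1 : (1:ℝ) ≤ (k:ℝ) := by exact_mod_cast (by exact_mod_cast h0 : 0 < k)
          nlinarith
        by_cases hpos : ∃ j, 0 < c j
        · by_cases hneg : ∃ j, c j < 0
          · -- mixed signs : t = 0
            obtain ⟨jp, hjp⟩ := hpos
            obtain ⟨jn, hjn⟩ := hneg
            refine ⟨0, (hSC 0).1 S.zero_mem, ?_, ?_⟩
            · have : N < 0 := by
                rw [hN]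
                have := Finset.sum_lt_sum (f := fun j : Fin n => min (c j) 0)
                  (g := fun _ => (0:ℝ)) (fun j _ => min_le_right _ _)
                  ⟨jn, Finset.mem_univ _, by show min (c jn) 0 < 0; rw [min_eq_left hjn.le]; exact hjn⟩
                simpa using this
              exact div_neg_of_neg_of_pos this hr0
            · have : 0 < P := by
                rw [hP]
                have := Finset.sum_lt_sum (f := fun _ : Fin n => (0:ℝ))
                  (g := fun j : Fin n => max (c j) 0) (fun j _ => le_max_right _ _)
                  ⟨jp, Finset.mem_univ _, by show (0:ℝ) < max (c jp) 0; rw [max_eq_left hjp.le]; exact hjp⟩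
                simpa using this
              exact div_pos this hr0
          · -- all coefficients nonnegative : t = b
            push_neg at hneg
            have hcnn : ∀ j, 0 ≤ c j := hneg
            have hN0 : N = 0 := by rw [hN]; exact Finset.sum_eq_zero fun j _ => min_eq_right (hcnn j)
            have hcj0 : 0 < c j0 := (hcnn j0).lt_of_ne (Ne.symm hj0)
            have hflam : ∀ i, b ≤ f (lam i) := by
              intro i
              refine hge _ ?_ ((hSC _).2 ((hmemC _).1 (hlamΓ i)))
              rw [hform]
              have h1 : lam i j0 * c j0 ≤ ∑ j, lam i j * c j :=
                Finset.single_le_sum (fun j _ => mul_nonneg (hlam01 i j).1.le (hcnn j))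
                  (Finset.mem_univ j0)
              nlinarith [(hlam01 i j0).1]
            have hsum : (r:ℝ) * b ≤ f u := by
              rw [hfu]
              calc (r:ℝ) * b = ∑ _i : Fin r, b := by
                    simp [Finset.sum_const, mul_comm]
              _ ≤ ∑ i, f (lam i) := Finset.sum_le_sum fun i _ => hflam i
            have hfuP : f u < P := by
              rw [hform, hP]
              refine Finset.sum_lt_sum (fun j _ => ?_) ⟨j0, Finset.mem_univ _, ?_⟩
              · rw [max_eq_left (hcnn j)]
                nlinarith [(hu01 j).2, (hu01 j).1, hcnn j]
              · rw [max_eq_left (hcnn j0)]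
                nlinarith [(hu01 j0).2, (hu01 j0).1]
            refine ⟨b, (hSC b).1 ((hmemb b).2 ⟨1, one_zsmul b⟩), ?_, ?_⟩
            · rw [hN0, zero_div]
              exact hb0
            · rw [lt_div_iff₀ hr0]
              nlinarith
        · -- all coefficients nonpositive : t = -b
          push_neg at hpos
          have hcnp : ∀ j, c j ≤ 0 := fun j => hpos j
          have hP0 : P = 0 := by rw [hP]; exact Finset.sum_eq_zero fun j _ => max_eq_right (hcnp j)
          have hcj0 : c j0 < 0 := (hcnp j0).lt_of_ne hj0
          have hflam : ∀ i, b ≤ -f (lam i) := by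
            intro i
            refine hge _ ?_ (S.neg_mem ((hSC _).2 ((hmemC _).1 (hlamΓ i))))
            rw [hform]
            have h1 : ∑ j, lam i j * c j ≤ lam i j0 * c j0 := by
              have h4 := Finset.single_le_sum
                (f := fun j => -(lam i j * c j))
                (fun j _ => by show (0:ℝ) ≤ -(lam i j * c j); nlinarith [(hlam01 i j).1, hcnp j])
                (Finset.mem_univ j0)
              have h3 : -(lam i j0 * c j0) ≤ ∑ j, -(lam i j * c j) := h4
              have h2 : ∑ j, -(lam i j * c j) = -∑ j, lam i j * c j := by
                rw [Finset.sum_neg_distrib]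
              linarith [h3, h2]
            nlinarith [(hlam01 i j0).1]
          have hsum : (r:ℝ) * b ≤ -f u := by
            rw [hfu]
            have : (r:ℝ) * b = ∑ _i : Fin r, b := by
              simp [Finset.sum_const, mul_comm]
            rw [this, ← Finset.sum_neg_distrib]
            exact Finset.sum_le_sum fun i _ => hflam i
          have hfuN : N < f u := by
            rw [hform, hN]
            refine Finset.sum_lt_sum (fun j _ => ?_) ⟨j0, Finset.mem_univ _, ?_⟩
            · rw [min_eq_left (hcnp j)]
              nlinarith [(hu01 j).2, (hu01 j).1, hcnp j]
            · rw [min_eq_left (hcnp j0)]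
              nlinarith [(hu01 j0).2, (hu01 j0).1]
          refine ⟨-b, (hSC _).1 ((hmemb _).2 ⟨-1, by rw [neg_zsmul, one_zsmul]⟩), ?_, ?_⟩
          · rw [div_lt_iff₀ hr0]
            nlinarith
          · rw [hP0]
            simp only [zero_div]
            linarith
    obtain ⟨w, hw, hfw⟩ := exists_cube_val n r hr f t (by rw [hNdef]; exact ht1)
      (by rw [hPdef]; exact ht2)
    exact ⟨qmap n w, (hmemC w).2 (by rw [hfw]; exact htC), w, hw, rfl⟩
  · rintro ⟨θ, hθΓ, v, hv, rfl⟩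
    have h1r : 1 / (r:ℝ) ≤ 1 := by
      rw [div_le_one hr0]; exact_mod_cast hr
    refine ⟨fun _ => v, fun i j => ⟨(hv j).1, lt_of_lt_of_le (hv j).2 h1r⟩,
      fun i => hθΓ, fun j => ?_⟩
    rw [Finset.sum_const, Finset.card_univ, Fintype.card_fin, nsmul_eq_mul]
    calc (r:ℝ) * v j < r * (1 / r) := by
          exact mul_lt_mul_of_pos_left (hv j).2 hr0
    _ = 1 := by field_simp
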